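/- Let 0 < μ < 1 and 0 < σ < 1 with σ ≠ μ, and set κ = max{μ, σ}. Then there exist constants k₁ > 0 and k₂ > 0 such that for every positive real sequence (ψ_i) and every n ≥ 1: k₁ ∑_{i=1}^{n} κ^{n−i} ψ_i ≤ ∑_{k=1}^{n} μ^{n−k} ∑_{i=1}^{k} σ^{k−i} ψ_i ≤ k₂ ∑_{i=1}^{n} κ^{n−i} ψ_i. -/
import Mathlib

open Finset

lemma geom_conv_bounds (a b : ℝ) (hb : 0 < b) (hba : b < a) (m : ℕ) :
    a ^ m ≤ (∑ j ∈ Finset.range (m + 1), a ^ (m - j) * b ^ j) ∧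
    (∑ j ∈ Finset.range (m + 1), a ^ (m - j) * b ^ j) ≤ (1 - b / a)⁻¹ * a ^ m := by
  have ha : 0 < a := hb.trans hba
  have hr0 : 0 ≤ b / a := by positivity
  have hr1 : b / a < 1 := (div_lt_one ha).mpr hba
  constructor
  · have h := Finset.single_le_sum (f := fun j => a ^ (m - j) * b ^ j)
      (fun j _ => by positivity) (Finset.mem_range.mpr (Nat.succ_pos m))
    simpa using h
  · have key : ∀ j ∈ Finset.range (m + 1), a ^ (m - j) * b ^ j = a ^ m * (b / a) ^ j := by
      intro j hj
      have hj' : j ≤ m := Nat.lt_succ_iff.mp (Finset.mem_range.mp hj)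
      rw [div_pow, pow_sub₀ a (ne_of_gt ha) hj']
      field_simp
    rw [Finset.sum_congr rfl key, ← Finset.mul_sum]
    rw [mul_comm ((1 - b / a)⁻¹) (a ^ m)]
    refine mul_le_mul_of_nonneg_left ?_ (by positivity)
    exact Summable.sum_le_tsum _ (fun j _ => by positivity)
      (summable_geometric_of_lt_one hr0 hr1) |>.trans
      (le_of_eq (tsum_geometric_of_lt_one hr0 hr1))

lemma geom_conv_bounds' (μ σ : ℝ) (hμ0 : 0 < μ) (hσ0 : 0 < σ) (hne : σ ≠ μ) (m : ℕ) :
    max μ σ ^ m ≤ (∑ j ∈ Finset.range (m + 1), μ ^ (m - j) * σ ^ j) ∧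
    (∑ j ∈ Finset.range (m + 1), μ ^ (m - j) * σ ^ j)
      ≤ (1 - min μ σ / max μ σ)⁻¹ * max μ σ ^ m := by
  rcases lt_or_gt_of_ne hne with h | h
  · -- σ < μ : max = μ, min = σ
    rw [max_eq_left h.le, min_eq_right h.le]
    exact geom_conv_bounds μ σ hσ0 h m
  · -- μ < σ
    rw [max_eq_right h.le, min_eq_left h.le]
    have hsym : (∑ j ∈ Finset.range (m + 1), μ ^ (m - j) * σ ^ j)
        = ∑ j ∈ Finset.range (m + 1), σ ^ (m - j) * μ ^ j := by
      rw [← Finset.sum_range_reflect]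
      refine Finset.sum_congr rfl fun j hj => ?_
      have hj' : j ≤ m := Nat.lt_succ_iff.mp (Finset.mem_range.mp hj)
      have h1 : m + 1 - 1 - j = m - j := by omega
      have h2 : m - (m - j) = j := by omega
      rw [h1, h2, mul_comm]
    rw [hsym]
    exact geom_conv_bounds σ μ hμ0 h m

/-- Comparison of a doubly geometric convolution with a single geometric convolution:
for `0 < μ, σ < 1` with `σ ≠ μ` and `κ = max μ σ`, there are constants `k₁, k₂ > 0`
(depending only on `μ` and `σ`) such that for every positive sequence `ψ` and every `n ≥ 1`,
`k₁ ∑_{i=1}^n κ^{n-i} ψ_i ≤ ∑_{k=1}^n μ^{n-k} ∑_{i=1}^k σ^{k-i} ψ_i ≤ k₂ ∑_{i=1}^n κ^{n-i} ψ_i`. -/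
theorem double_geometric_convolution_comparison (μ σ : ℝ)
    (hμ0 : 0 < μ) (hμ1 : μ < 1) (hσ0 : 0 < σ) (hσ1 : σ < 1) (hne : σ ≠ μ) :
    ∃ k₁ : ℝ, 0 < k₁ ∧ ∃ k₂ : ℝ, 0 < k₂ ∧ ∀ ψ : ℕ → ℝ, (∀ i, 0 < ψ i) → ∀ n : ℕ, 1 ≤ n →
      k₁ * ∑ i ∈ Finset.Icc 1 n, max μ σ ^ (n - i) * ψ i
          ≤ ∑ k ∈ Finset.Icc 1 n, μ ^ (n - k) * ∑ i ∈ Finset.Icc 1 k, σ ^ (k - i) * ψ i ∧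
      ∑ k ∈ Finset.Icc 1 n, μ ^ (n - k) * ∑ i ∈ Finset.Icc 1 k, σ ^ (k - i) * ψ i
          ≤ k₂ * ∑ i ∈ Finset.Icc 1 n, max μ σ ^ (n - i) * ψ i := by
  set κ := max μ σ with hκ
  have hκ0 : 0 < κ := lt_max_of_lt_left hμ0
  have hρ : min μ σ / κ < 1 := by
    rcases lt_or_gt_of_ne hne with h | h
    · rw [hκ, max_eq_left h.le, min_eq_right h.le]; exact (div_lt_one hμ0).mpr h
    · rw [hκ, max_eq_right h.le, min_eq_left h.le]; exact (div_lt_one hσ0).mpr h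
  have hk2 : 0 < (1 - min μ σ / κ)⁻¹ := by
    have : 0 < 1 - min μ σ / κ := by linarith
    positivity
  refine ⟨1, one_pos, (1 - min μ σ / κ)⁻¹, hk2, fun ψ hψ n hn => ?_⟩
  -- rewrite the double sum as a single sum over i
  have hswap : (∑ k ∈ Finset.Icc 1 n, μ ^ (n - k) * ∑ i ∈ Finset.Icc 1 k, σ ^ (k - i) * ψ i)
      = ∑ i ∈ Finset.Icc 1 n, (∑ j ∈ Finset.range (n - i + 1), μ ^ ((n - i) - j) * σ ^ j) * ψ i := by
    have h1 : (∑ k ∈ Finset.Icc 1 n, μ ^ (n - k) * ∑ i ∈ Finset.Icc 1 k, σ ^ (k - i) * ψ i)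
        = ∑ k ∈ Finset.Icc 1 n, ∑ i ∈ Finset.Icc 1 k, μ ^ (n - k) * σ ^ (k - i) * ψ i := by
      refine Finset.sum_congr rfl fun k _ => ?_
      rw [Finset.mul_sum]
      exact Finset.sum_congr rfl fun i _ => by ring
    rw [h1, Finset.sum_comm' (s' := fun i => Finset.Icc i n) (t' := Finset.Icc 1 n)
      (by intro k i; simp only [Finset.mem_Icc]; omega)]
    refine Finset.sum_congr rfl fun i hi => ?_
    have hi' : 1 ≤ i ∧ i ≤ n := Finset.mem_Icc.mp hi
    rw [← Finset.sum_mul]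
    congr 1
    have : Finset.Icc i n = Finset.Ico i (n + 1) := by
      ext x; simp [Nat.lt_succ_iff]
    rw [this, Finset.sum_Ico_eq_sum_range]
    have hlen : n + 1 - i = n - i + 1 := by omega
    rw [hlen]
    refine Finset.sum_congr rfl fun j hj => ?_
    have hj' : j ≤ n - i := Nat.lt_succ_iff.mp (Finset.mem_range.mp hj)
    have e1 : n - (i + j) = (n - i) - j := by omega
    have e2 : i + j - i = j := by omega
    rw [e1, e2]
  rw [hswap]
  constructor
  · rw [one_mul]
    refine Finset.sum_le_sum fun i _ => ?_
    exact mul_le_mul_of_nonneg_right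
      ((geom_conv_bounds' μ σ hμ0 hσ0 hne (n - i)).1) (hψ i).le
  · rw [Finset.mul_sum]
    refine Finset.sum_le_sum fun i _ => ?_
    have := (geom_conv_bounds' μ σ hμ0 hσ0 hne (n - i)).2
    calc (∑ j ∈ Finset.range (n - i + 1), μ ^ ((n - i) - j) * σ ^ j) * ψ i
        ≤ ((1 - min μ σ / κ)⁻¹ * κ ^ (n - i)) * ψ i :=
          mul_le_mul_of_nonneg_right this (hψ i).le
      _ = (1 - min μ σ / κ)⁻¹ * (κ ^ (n - i) * ψ i) := by ring
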